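/- Let T be a lexicographically ordered ω₁-tree such that for every v ∈ T the first level of the cone T_v that is not a singleton is, under <lex, order-isomorphic to the rationals. Let U be a downward-closed pruned subtree of T of height ω₁ which has no local end points, and let t ∈ U. Then there is a club (closed unbounded) set E ⊆ ω₁ such that for every δ ∈ E with δ > ht(t), the linearly ordered set (U_t(δ), <lex) is order-isomorphic to the rationals, i.e., it is a countable dense linear order without end points. -/

import Mathlib

noncomputable section

open Cardinal Set

def omega1 : Ordinal := (Cardinal.aleph 1).ord

def omega2 : Ordinal := (Cardinal.aleph 2).ord

/-- The height of an element `t`: the order type of its set of strict predecessors. -/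
def htOf {X : Type} (lt : X → X → Prop)
    (wo : ∀ t : X, IsWellOrder {s : X // lt s t} fun a b => lt a.1 b.1) (t : X) : Ordinal :=
  @Ordinal.type {s : X // lt s t} (fun a b => lt a.1 b.1) (wo t)

/-- A lexicographically ordered (normal) `ω₁`-tree. -/
structure LexOmega1Tree where
  T : Type
  lt : T → T → Prop
  lt_irrefl : ∀ a : T, ¬ lt a a
  lt_trans : ∀ {a b c : T}, lt a b → lt b c → lt a c
  /-- the strict predecessors of any element are well-ordered -/
  predWO : ∀ t : T, IsWellOrder {s : T // lt s t} fun a b => lt a.1 b.1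
  /-- every level is countable -/
  level_countable : ∀ α : Ordinal, {t : T | htOf lt predWO t = α}.Countable
  /-- levels are nonempty exactly below `ω₁` -/
  level_nonempty : ∀ α : Ordinal, (∃ t : T, htOf lt predWO t = α) ↔ α < omega1
  /-- normality: distinct elements of the same limit height have different predecessors -/
  normal : ∀ s t : T, htOf lt predWO s = htOf lt predWO t →
    Order.IsSuccLimit (htOf lt predWO s) → (∀ u : T, lt u s ↔ lt u t) → s = t
  /-- the lexicographic comparison of distinct elements of equal height -/
  lexlt : T → T → Prop
  lexlt_same : ∀ a b : T, lexlt a b → htOf lt predWO a = htOf lt predWO b ∧ a ≠ b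
  lexlt_tricho : ∀ a b : T, htOf lt predWO a = htOf lt predWO b → a ≠ b →
    lexlt a b ∨ lexlt b a
  lexlt_asymm : ∀ a b : T, lexlt a b → ¬ lexlt b a
  lexlt_trans : ∀ {a b c : T}, lexlt a b → lexlt b c → lexlt a c
  /-- coherence: the lexicographic comparison is decided at the splitting level -/
  lexlt_coh : ∀ a b a' b' : T, lexlt a b → lt a a' → lt b b' →
    htOf lt predWO a' = htOf lt predWO b' → lexlt a' b'

namespace LexOmega1Tree

variable (S : LexOmega1Tree)

def ht : S.T → Ordinal := htOf S.lt S.predWO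

def le (a b : S.T) : Prop := S.lt a b ∨ a = b

/-- a cofinal branch : a downward closed chain meeting every level -/
def IsBranch (b : Set S.T) : Prop :=
  (∀ s t : S.T, t ∈ b → S.lt s t → s ∈ b) ∧
  (∀ s t : S.T, s ∈ b → t ∈ b → s = t ∨ S.lt s t ∨ S.lt t s) ∧
  (∀ α : Ordinal, α < omega1 → ∃ t ∈ b, S.ht t = α)

/-- the set `𝓑(T)` of cofinal branches -/
def Branch : Type := {b : Set S.T // S.IsBranch b}

/-- the lexicographic order on branches (and on arbitrary sets of nodes) -/
def blex (A B : Set S.T) : Prop := ∃ a ∈ A, ∃ b ∈ B, S.lexlt a b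

/-- the order topology on `(𝓑(T), <lex)`, generated by the open rays -/
def branchTop : TopologicalSpace S.Branch :=
  TopologicalSpace.generateFrom
    {s : Set S.Branch | ∃ a : S.Branch, s = {x | S.blex a.1 x.1} ∨ s = {x | S.blex x.1 a.1}}

/-- `b` is a local right end point of the downward closed subtree `W` -/
def IsLocalRightEP (W b : Set S.T) : Prop :=
  ∃ t ∈ b, ∀ s ∈ b, S.ht t ≤ S.ht s →
    ∀ u ∈ W, S.ht u = S.ht s → S.le t u → u = s ∨ S.lexlt u s

/-- `b` is a local left end point of the downward closed subtree `W` -/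
def IsLocalLeftEP (W b : Set S.T) : Prop :=
  ∃ t ∈ b, ∀ s ∈ b, S.ht t ≤ S.ht s →
    ∀ u ∈ W, S.ht u = S.ht s → S.le t u → u = s ∨ S.lexlt s u

def IsLocalEP (W b : Set S.T) : Prop := S.IsLocalRightEP W b ∨ S.IsLocalLeftEP W b

end LexOmega1Tree

namespace LexOmega1Tree

variable (S : LexOmega1Tree)

/-- the level of height `α` of the cone `T_v` (the set of elements comparable with `v`) -/
def coneLevel (v : S.T) (α : Ordinal) : Set S.T :=
  {s : S.T | (S.le s v ∨ S.le v s) ∧ S.ht s = α}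

/-- `(A, <lex)` is order isomorphic to the rationals: a countable nonempty dense linear
order without end points. -/
def IsoRatOn (A : Set S.T) : Prop :=
  A.Countable ∧ A.Nonempty ∧
  (∀ a ∈ A, ∀ b ∈ A, S.lexlt a b → ∃ c ∈ A, S.lexlt a c ∧ S.lexlt c b) ∧
  (∀ a ∈ A, ∃ b ∈ A, S.lexlt a b) ∧
  (∀ a ∈ A, ∃ b ∈ A, S.lexlt b a)

/-- for every `v`, the first level of the cone `T_v` that is not a singleton is,
under `<lex`, order isomorphic to the rationals -/
def RatBranching : Prop :=
  ∀ v : S.T, ∃ α : Ordinal,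
    ¬ (S.coneLevel v α).Subsingleton ∧
    (∀ β : Ordinal, β < α → (S.coneLevel v β).Subsingleton) ∧
    S.IsoRatOn (S.coneLevel v α)

end LexOmega1Tree

/-- `E` is a club (closed unbounded) subset of the ordinal `o`. -/
def IsClubBelow (E : Set Ordinal) (o : Ordinal) : Prop :=
  E ⊆ Set.Iio o ∧
  (∀ α : Ordinal, α < o → ∃ β ∈ E, α ≤ β) ∧
  (∀ α : Ordinal, α < o → Order.IsSuccLimit α →
    (∀ β : Ordinal, β < α → ∃ γ ∈ E, β < γ ∧ γ < α) → α ∈ E)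


section Helpers

namespace LexOmega1Tree

variable {S : LexOmega1Tree}

theorem le_rfl' (a : S.T) : S.le a a := Or.inr rfl

theorem le_trans' {a b c : S.T} (h : S.le a b) (h' : S.le b c) : S.le a c := by
  rcases h with h | rfl
  · rcases h' with h' | rfl
    · exact Or.inl (S.lt_trans h h')
    · exact Or.inl h
  · exact h'

theorem ht_pred {t : S.T} (s : {x : S.T // S.lt x t}) :
    S.ht s.1 =
      (@Ordinal.typein _ (fun a b : {x : S.T // S.lt x t} => S.lt a.1 b.1) (S.predWO t)) s := by
  haveI := S.predWO t
  haveI := S.predWO s.1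
  rw [← Ordinal.type_subrel]
  exact Ordinal.type_eq.mpr ⟨⟨⟨fun x => ⟨⟨x.1, S.lt_trans x.2 s.2⟩, x.2⟩,
    fun y => ⟨y.1.1, y.2⟩, fun x => rfl, fun y => rfl⟩, Iff.rfl⟩⟩

theorem ht_lt_of_lt {s t : S.T} (h : S.lt s t) : S.ht s < S.ht t := by
  haveI := S.predWO t
  rw [ht_pred (⟨s, h⟩ : {x : S.T // S.lt x t})]
  exact Ordinal.typein_lt_type _ _

theorem ht_le_of_le {s t : S.T} (h : S.le s t) : S.ht s ≤ S.ht t := by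
  rcases h with h | rfl
  · exact (ht_lt_of_lt h).le
  · exact le_rfl

theorem exists_restrict (t : S.T) {α : Ordinal} (h : α ≤ S.ht t) :
    ∃ s : S.T, S.le s t ∧ S.ht s = α := by
  rcases eq_or_lt_of_le h with rfl | h'
  · exact ⟨t, Or.inr rfl, rfl⟩
  · haveI := S.predWO t
    refine ⟨(Ordinal.enum (fun a b : {x : S.T // S.lt x t} => S.lt a.1 b.1) ⟨α, h'⟩).1,
      Or.inl (Ordinal.enum (fun a b : {x : S.T // S.lt x t} => S.lt a.1 b.1) ⟨α, h'⟩).2, ?_⟩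
    rw [ht_pred]
    exact Ordinal.typein_enum _ _

theorem pred_le_pred {a s w : S.T} (hs : S.le s a) (hw : S.le w a) (h : S.ht s ≤ S.ht w) :
    S.le s w := by
  rcases hs with hs | rfl
  · rcases hw with hw | rfl
    · haveI := S.predWO a
      rcases trichotomous_of (fun x y : {x : S.T // S.lt x a} => S.lt x.1 y.1)
          ⟨s, hs⟩ ⟨w, hw⟩ with h1 | h1 | h1
      · exact Or.inl h1
      · exact Or.inr (congrArg Subtype.val h1)
      · exact absurd (ht_lt_of_lt (h1 : S.lt w s)) (not_lt.mpr h)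
    · exact Or.inl hs
  · rcases hw with hw | rfl
    · exact absurd (ht_lt_of_lt hw) (not_lt.mpr h)
    · exact Or.inr rfl

theorem pred_eq {a s w : S.T} (hs : S.le s a) (hw : S.le w a) (h : S.ht s = S.ht w) : s = w := by
  rcases pred_le_pred hs hw h.le with h1 | h1
  · exact absurd (ht_lt_of_lt h1) (by rw [h]; exact _root_.lt_irrefl _)
  · exact h1

theorem ht_lt_omega1 (t : S.T) : S.ht t < omega1 := (S.level_nonempty (S.ht t)).mp ⟨t, rfl⟩

end LexOmega1Tree

open LexOmega1Tree in
/-- If `U` (downward closed, pruned) has no cofinal branch which is a local right end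
point, then above any `u ∈ U` the tree `U` is eventually never "right-bounded": from some
level `lam` on, every node of `U` above `u` has a strictly `<lex`-larger node of `U` above
`u` at the same height. -/
theorem LexOmega1Tree.factD (S : LexOmega1Tree) (U : Set S.T)
    (hdc : ∀ s t : S.T, t ∈ U → S.lt s t → s ∈ U)
    (hpruned : ∀ u ∈ U, ∀ α : Ordinal, S.ht u ≤ α → α < omega1 →
      ∃ s ∈ U, S.le u s ∧ S.ht s = α)
    (hnoR : ∀ b : Set S.T, S.IsBranch b → b ⊆ U → ¬ S.IsLocalRightEP U b)
    (u : S.T) (hu : u ∈ U) :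
    ∃ lam : Ordinal, lam < omega1 ∧ S.ht u ≤ lam ∧
      ∀ w ∈ U, S.le u w → lam ≤ S.ht w →
        ∃ c ∈ U, S.le u c ∧ S.ht c = S.ht w ∧ S.lexlt w c := by
  by_contra hcon
  push_neg at hcon
  set Bad : Set S.T :=
    {w | w ∈ U ∧ S.le u w ∧ ∀ c ∈ U, S.le u c → S.ht c = S.ht w → ¬ S.lexlt w c} with hBadDef
  have bad_u : u ∈ Bad := by
    refine ⟨hu, Or.inr rfl, fun c hc huc hhc hlex => ?_⟩
    have hcu : c = u := (pred_eq huc (le_rfl' c) hhc.symm).symm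
    rw [hcu] at hlex
    exact S.lexlt_asymm u u hlex hlex
  have bad_down : ∀ w ∈ Bad, ∀ s, S.le u s → S.le s w → s ∈ Bad := by
    intro w hw s hus hsw
    have hsU : s ∈ U := by
      rcases hsw with h | rfl
      · exact hdc s w hw.1 h
      · exact hw.1
    refine ⟨hsU, hus, fun c hc huc hhc hlex => ?_⟩
    rcases eq_or_lt_of_le (ht_le_of_le hsw) with heq | hlt
    · have hsweq : s = w := pred_eq hsw (le_rfl' w) heq
      subst hsweq
      exact hw.2.2 c hc huc hhc hlex
    · obtain ⟨c', hc'U, hcc', hhc'⟩ := hpruned c hc (S.ht w) (by rw [hhc]; exact hlt.le)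
        (ht_lt_omega1 w)
      refine hw.2.2 c' hc'U (le_trans' huc hcc') hhc' ?_
      have h1 : S.lt s w := by
        rcases hsw with h | rfl
        · exact h
        · exact absurd hlt (_root_.lt_irrefl _)
      have h2 : S.lt c c' := by
        rcases hcc' with h | heq2
        · exact h
        · exfalso
          rw [heq2] at hhc
          rw [hhc'] at hhc
          exact absurd hhc (ne_of_gt hlt)
      exact S.lexlt_coh s c w c' hlex h1 h2 hhc'.symm
  have bad_chain : ∀ w ∈ Bad, ∀ w' ∈ Bad, S.ht w ≤ S.ht w' → S.le w w' := by
    intro w hw w' hw' hle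
    obtain ⟨r, hrw', hrht⟩ := exists_restrict w' (α := S.ht w) hle
    have hur : S.le u r := pred_le_pred hw'.2.1 hrw' (by rw [hrht]; exact ht_le_of_le hw.2.1)
    have hrU : r ∈ U := by
      rcases hrw' with h | rfl
      · exact hdc _ _ hw'.1 h
      · exact hw'.1
    by_cases hrw : r = w
    · rw [← hrw]; exact hrw'
    · rcases S.lexlt_tricho r w hrht hrw with hlex | hlex
      · exfalso
        rcases eq_or_lt_of_le hle with heq | hlt
        · have hrr : r = w' := pred_eq hrw' (le_rfl' w') (by rw [hrht]; exact heq)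
          exact hw'.2.2 w hw.1 hw.2.1 heq (hrr ▸ hlex)
        · obtain ⟨c, hcU, hwc, hch⟩ := hpruned w hw.1 (S.ht w') hle (ht_lt_omega1 w')
          have h1 : S.lt r w' := by
            rcases hrw' with h | heq
            · exact h
            · exfalso
              rw [heq] at hrht
              exact absurd hrht (ne_of_gt hlt)
          have h2 : S.lt w c := by
            rcases hwc with h | heq
            · exact h
            · exfalso
              rw [← heq] at hch
              exact absurd hch (ne_of_lt hlt)
          exact hw'.2.2 c hcU (le_trans' hw.2.1 hwc) hch
            (S.lexlt_coh r w w' c hlex h1 h2 hch.symm)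
      · exact absurd hlex (hw.2.2 r hrU hur hrht)
  have tri : ∀ x y z : S.T, S.le x z → S.le y z → x = y ∨ S.lt x y ∨ S.lt y x := by
    intro x y z hx hy
    rcases le_total (S.ht x) (S.ht y) with hh | hh
    · rcases pred_le_pred hx hy hh with h1 | h1
      · exact Or.inr (Or.inl h1)
      · exact Or.inl h1
    · rcases pred_le_pred hy hx hh with h1 | h1
      · exact Or.inr (Or.inr h1)
      · exact Or.inl h1.symm
  set b : Set S.T := {s | ∃ w ∈ Bad, S.le s w} with hbDef
  have hbU : b ⊆ U := by
    rintro s ⟨w, hw, hsw⟩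
    rcases hsw with h | rfl
    · exact hdc _ _ hw.1 h
    · exact hw.1
  have hbranch : S.IsBranch b := by
    refine ⟨?_, ?_, ?_⟩
    · rintro s t ⟨w, hw, htw⟩ hst
      exact ⟨w, hw, le_trans' (Or.inl hst) htw⟩
    · rintro s s' ⟨w, hw, hsw⟩ ⟨w', hw', hsw'⟩
      rcases le_total (S.ht w) (S.ht w') with h | h
      · exact tri s s' w' (le_trans' hsw (bad_chain w hw w' hw' h)) hsw'
      · exact tri s s' w hsw (le_trans' hsw' (bad_chain w' hw' w hw h))
    · intro α hα
      rcases le_or_gt (S.ht u) α with h | h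
      · obtain ⟨w, hwU, huw, hαw, hbadc⟩ := hcon α hα h
        obtain ⟨s, hsw, hsh⟩ := exists_restrict w (α := α) hαw
        exact ⟨s, ⟨w, ⟨hwU, huw, hbadc⟩, hsw⟩, hsh⟩
      · obtain ⟨s, hsu, hsh⟩ := exists_restrict u (α := α) h.le
        exact ⟨s, ⟨u, bad_u, hsu⟩, hsh⟩
  apply hnoR b hbranch hbU
  refine ⟨u, ⟨u, bad_u, le_rfl' u⟩, ?_⟩
  intro s hs hts w' hw'U hhw' huw'
  obtain ⟨w₀, hw₀, hsw₀⟩ := hs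
  have hus : S.le u s := pred_le_pred hw₀.2.1 hsw₀ hts
  have hsBad : s ∈ Bad := bad_down w₀ hw₀ s hus hsw₀
  by_cases he : w' = s
  · exact Or.inl he
  · rcases S.lexlt_tricho w' s hhw' he with h1 | h1
    · exact Or.inr h1
    · exact absurd h1 (hsBad.2.2 w' hw'U huw' hhw')

/-- the same tree with the reversed lexicographic orderings -/
def LexOmega1Tree.flip (S : LexOmega1Tree) : LexOmega1Tree where
  T := S.T
  lt := S.lt
  lt_irrefl := S.lt_irrefl
  lt_trans := S.lt_trans
  predWO := S.predWO
  level_countable := S.level_countable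
  level_nonempty := S.level_nonempty
  normal := S.normal
  lexlt := fun a b => S.lexlt b a
  lexlt_same := fun a b h => ⟨(S.lexlt_same b a h).1.symm, (S.lexlt_same b a h).2.symm⟩
  lexlt_tricho := fun a b h h' => (S.lexlt_tricho a b h h').symm
  lexlt_asymm := fun a b h => S.lexlt_asymm b a h
  lexlt_trans := fun h h' => S.lexlt_trans h' h
  lexlt_coh := fun a b a' b' h ha hb hh => S.lexlt_coh b a b' a' h hb ha hh.symm

theorem LexOmega1Tree.factD_left (S : LexOmega1Tree) (U : Set S.T)
    (hdc : ∀ s t : S.T, t ∈ U → S.lt s t → s ∈ U)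
    (hpruned : ∀ u ∈ U, ∀ α : Ordinal, S.ht u ≤ α → α < omega1 →
      ∃ s ∈ U, S.le u s ∧ S.ht s = α)
    (hnoL : ∀ b : Set S.T, S.IsBranch b → b ⊆ U → ¬ S.IsLocalLeftEP U b)
    (u : S.T) (hu : u ∈ U) :
    ∃ lam : Ordinal, lam < omega1 ∧ S.ht u ≤ lam ∧
      ∀ w ∈ U, S.le u w → lam ≤ S.ht w →
        ∃ c ∈ U, S.le u c ∧ S.ht c = S.ht w ∧ S.lexlt c w :=
  LexOmega1Tree.factD (LexOmega1Tree.flip S) U hdc hpruned hnoL u hu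

theorem omega1_isLimit : Order.IsSuccLimit omega1 :=
  Cardinal.isSuccLimit_ord (Cardinal.aleph0_le_aleph 1)

theorem nat_iSup_lt_omega1 {f : ℕ → Ordinal} (h : ∀ n, f n < omega1) :
    (⨆ n, f n) < omega1 := by
  have : omega1 = (Cardinal.aleph 1).ord := rfl
  rw [this] at h ⊢
  refine Cardinal.iSup_lt_ord_lift_of_isRegular Cardinal.isRegular_aleph_one ?_ h
  simpa using Cardinal.aleph0_lt_aleph_one

theorem countable_Iio_omega1 {β : Ordinal} (hβ : β < omega1) : (Set.Iio β).Countable := by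
  rw [Cardinal.countable_iff_lt_aleph_one, Ordinal.mk_Iio_ordinal]
  have h1 : β.card < Cardinal.aleph 1 := Cardinal.lt_ord.mp hβ
  refine lt_of_lt_of_le (Cardinal.lift_lt.mpr h1) ?_
  exact le_of_eq (by rw [Cardinal.lift_aleph, Ordinal.lift_one])

theorem LexOmega1Tree.countable_below (S : LexOmega1Tree) {β : Ordinal} (hβ : β < omega1) :
    {u : S.T | S.ht u ≤ β}.Countable := by
  have hsub : {u : S.T | S.ht u ≤ β} ⊆ ⋃ γ ∈ Set.Iio (Order.succ β), {u : S.T | S.ht u = γ} := by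
    intro x hx
    exact Set.mem_biUnion (Set.mem_Iio.mpr (Order.lt_succ_iff.mpr hx)) rfl
  exact ((countable_Iio_omega1 (omega1_isLimit.succ_lt hβ)).biUnion
    (fun γ _ => S.level_countable γ)).mono hsub

end Helpers

/-- Let `T` be a lexicographically ordered `ω₁`-tree such that for every `v`
the first non-singleton level of the cone `T_v` is order isomorphic to `ℚ` under `<lex`.
If `U` is a downward-closed pruned subtree of height `ω₁` without local end points and
`t ∈ U`, then there is a club `E ⊆ ω₁` such that for every `δ ∈ E` above `ht t`, the
level `U_t(δ)` is order isomorphic to the rationals under `<lex`. -/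
theorem stmt6 (S : LexOmega1Tree) (hrat : S.RatBranching)
    (U : Set S.T)
    (hdc : ∀ s t : S.T, t ∈ U → S.lt s t → s ∈ U)
    (hpruned : ∀ u ∈ U, ∀ α : Ordinal, S.ht u ≤ α → α < omega1 →
      ∃ s ∈ U, S.le u s ∧ S.ht s = α)
    (hht : ∀ α : Ordinal, α < omega1 → ∃ u ∈ U, S.ht u = α)
    (hnoEP : ∀ b : Set S.T, S.IsBranch b → b ⊆ U → ¬ S.IsLocalEP U b)
    (t : S.T) (htU : t ∈ U) :
    ∃ E : Set Ordinal, IsClubBelow E omega1 ∧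
      ∀ δ ∈ E, S.ht t < δ →
        S.IsoRatOn {s : S.T | s ∈ U ∧ S.ht s = δ ∧ (S.le s t ∨ S.le t s)} := by
  classical
  have hnoR : ∀ b : Set S.T, S.IsBranch b → b ⊆ U → ¬ S.IsLocalRightEP U b :=
    fun b hb hbU h => hnoEP b hb hbU (Or.inl h)
  have hnoL : ∀ b : Set S.T, S.IsBranch b → b ⊆ U → ¬ S.IsLocalLeftEP U b :=
    fun b hb hbU h => hnoEP b hb hbU (Or.inr h)
  choose! lamR hlamR1 hlamR2 hlamR3 using
    fun (u : S.T) (hu : u ∈ U) => LexOmega1Tree.factD S U hdc hpruned hnoR u hu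
  choose! lamL hlamL1 hlamL2 hlamL3 using
    fun (u : S.T) (hu : u ∈ U) => LexOmega1Tree.factD_left S U hdc hpruned hnoL u hu
  set E : Set Ordinal :=
    {δ | δ < omega1 ∧ Order.IsSuccLimit δ ∧ ∀ u ∈ U, S.ht u < δ → lamR u < δ ∧ lamL u < δ} with hEdef
  have hstep : ∀ x y : Ordinal, x ≤ y → x < y + 1 := by
    intro x y h
    rw [Ordinal.add_one_eq_succ]
    exact h.trans_lt (Order.lt_succ y)
  refine ⟨E, ⟨fun δ hδ => hδ.1, ?_, ?_⟩, ?_⟩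
  · -- unbounded
    intro α hα
    have key : ∀ β, β < omega1 →
        ∃ γ, γ < omega1 ∧ ∀ u ∈ U, S.ht u ≤ β → lamR u < γ ∧ lamL u < γ := by
      intro β hβ
      have hne : {u : S.T | u ∈ U ∧ S.ht u ≤ β}.Nonempty := by
        obtain ⟨u0, hu0, hu0h⟩ := hht 0 omega1_isLimit.pos
        exact ⟨u0, hu0, by rw [hu0h]; exact zero_le (a := β)⟩
      obtain ⟨g, hg⟩ := Set.Countable.exists_eq_range
        (((S.countable_below hβ)).mono (fun x hx => hx.2)) hne
      have hgU : ∀ n, g n ∈ U ∧ S.ht (g n) ≤ β := by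
        intro n
        have : g n ∈ {u : S.T | u ∈ U ∧ S.ht u ≤ β} := hg ▸ Set.mem_range_self n
        exact this
      refine ⟨(⨆ n, max (lamR (g n)) (lamL (g n)) + 1), ?_, ?_⟩
      · apply nat_iSup_lt_omega1
        intro n
        rw [Ordinal.add_one_eq_succ]
        exact omega1_isLimit.succ_lt (max_lt (hlamR1 _ (hgU n).1) (hlamL1 _ (hgU n).1))
      · intro u hu hub
        have : u ∈ Set.range g := hg ▸ (show u ∈ {u : S.T | u ∈ U ∧ S.ht u ≤ β} from ⟨hu, hub⟩)
        obtain ⟨n, rfl⟩ := this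
        constructor
        · exact lt_of_lt_of_le (hstep _ _ (le_max_left _ _))
            (Ordinal.le_iSup (fun n => max (lamR (g n)) (lamL (g n)) + 1) n)
        · exact lt_of_lt_of_le (hstep _ _ (le_max_right _ _))
            (Ordinal.le_iSup (fun n => max (lamR (g n)) (lamL (g n)) + 1) n)
    set K : Ordinal → Ordinal := fun β => if h : β < omega1 then (key β h).choose else 0
      with hKdef
    have hK1 : ∀ β, β < omega1 → K β < omega1 := by
      intro β h
      simp only [hKdef, dif_pos h]
      exact (key β h).choose_spec.1
    have hK2 : ∀ β, β < omega1 → ∀ u ∈ U, S.ht u ≤ β → lamR u < K β ∧ lamL u < K β := by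
      intro β h
      simp only [hKdef, dif_pos h]
      exact (key β h).choose_spec.2
    let g : ℕ → Ordinal := fun n => Nat.rec (α + 1) (fun _ ih => max (K ih) ih + 1) n
    have hgs : ∀ n, g (n + 1) = max (K (g n)) (g n) + 1 := fun n => rfl
    have hglt : ∀ n, g n < omega1 := by
      intro n
      induction n with
      | zero =>
        show α + 1 < omega1
        rw [Ordinal.add_one_eq_succ]
        exact omega1_isLimit.succ_lt hα
      | succ n ih =>
        rw [hgs, Ordinal.add_one_eq_succ]
        exact omega1_isLimit.succ_lt (max_lt (hK1 _ ih) ih)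
    have hmono : ∀ n, g n < g (n + 1) := by
      intro n
      rw [hgs]
      exact hstep _ _ (le_max_right _ _)
    have hgle : ∀ n, g n ≤ ⨆ m, g m := fun n => Ordinal.le_iSup g n
    have hglt' : ∀ n, g n < ⨆ m, g m := fun n => (hmono n).trans_le (hgle (n + 1))
    have hδlt : (⨆ m, g m) < omega1 := nat_iSup_lt_omega1 hglt
    have hltδ : ∀ x, x < (⨆ m, g m) → ∃ n, x < g n := by
      intro x hx
      exact Ordinal.lt_iSup_iff.mp hx
    refine ⟨⨆ m, g m, ⟨hδlt, Ordinal.isSuccLimit_iff.mpr ⟨?_, Order.isSuccPrelimit_iff_succ_lt.mpr ?_⟩, ?_⟩, ?_⟩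
    · exact ((lt_of_le_of_lt (zero_le (a := g 0)) (hglt' 0))).ne'
    · intro a ha
      obtain ⟨n, hn⟩ := hltδ a ha
      exact lt_of_le_of_lt (Order.succ_le_of_lt hn) (hglt' n)
    · intro u hu huδ
      obtain ⟨n, hn⟩ := hltδ _ huδ
      have h2 := hK2 (g n) (hglt n) u hu hn.le
      constructor
      · exact lt_of_lt_of_le
          (lt_of_lt_of_le h2.1 ((le_max_left _ _).trans (hstep _ _ le_rfl).le)) (by rw [← hgs]; exact hgle (n+1))
      · exact lt_of_lt_of_le
          (lt_of_lt_of_le h2.2 ((le_max_left _ _).trans (hstep _ _ le_rfl).le)) (by rw [← hgs]; exact hgle (n+1))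
    · have : α < g 0 := hstep _ _ le_rfl
      exact (this.trans_le (hgle 0)).le
  · -- closed
    intro α hα hlim hcl
    refine ⟨hα, hlim, ?_⟩
    intro u hu huα
    obtain ⟨γ, hγE, hγ1, hγ2⟩ := hcl (S.ht u) huα
    have h := hγE.2.2 u hu hγ1
    exact ⟨h.1.trans hγ2, h.2.trans hγ2⟩
  · -- the main property at each δ ∈ E
    intro δ hδE htδ
    obtain ⟨hδω, hδlim, hδcl⟩ := hδE
    have hmemA : ∀ {s : S.T}, s ∈ {s : S.T | s ∈ U ∧ S.ht s = δ ∧ (S.le s t ∨ S.le t s)} →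
        s ∈ U ∧ S.ht s = δ ∧ S.le t s := by
      rintro s ⟨h1, h2, h3 | h3⟩
      · exfalso
        have h4 := LexOmega1Tree.ht_le_of_le h3
        rw [h2] at h4
        exact absurd (lt_of_lt_of_le htδ h4) (_root_.lt_irrefl _)
      · exact ⟨h1, h2, h3⟩
    have hmk : ∀ {s : S.T}, s ∈ U → S.ht s = δ → S.le t s →
        s ∈ {s : S.T | s ∈ U ∧ S.ht s = δ ∧ (S.le s t ∨ S.le t s)} :=
      fun h1 h2 h3 => ⟨h1, h2, Or.inr h3⟩
    refine ⟨?_, ?_, ?_, ?_, ?_⟩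
    · -- countable
      exact (S.level_countable δ).mono (fun s hs => (hmemA hs).2.1)
    · -- nonempty
      obtain ⟨s, hsU, hts, hsh⟩ := hpruned t htU δ htδ.le hδω
      exact ⟨s, hmk hsU hsh hts⟩
    · -- dense
      rintro a ha b hb hab
      obtain ⟨haU, haδ, hta⟩ := hmemA ha
      obtain ⟨hbU, hbδ, htb⟩ := hmemA hb
      have hne : a ≠ b := (S.lexlt_same a b hab).2
      have hsplit : ∃ α', α' < δ ∧ ∃ ua ub : S.T,
          S.le ua a ∧ S.le ub b ∧ S.ht ua = α' ∧ S.ht ub = α' ∧ ua ≠ ub := by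
        by_contra hno
        push_neg at hno
        apply hne
        refine S.normal a b (haδ.trans hbδ.symm) ?_ ?_
        · show Order.IsSuccLimit (S.ht a)
          rw [haδ]
          exact hδlim
        · intro v
          constructor
          · intro hv
            have hvδ : S.ht v < δ := haδ ▸ LexOmega1Tree.ht_lt_of_lt hv
            obtain ⟨sb, hsb, hsbh⟩ := LexOmega1Tree.exists_restrict b (α := S.ht v)
              (by rw [hbδ]; exact hvδ.le)
            have hveq : v = sb := hno (S.ht v) hvδ v sb (Or.inl hv) hsb rfl hsbh
            rcases hsb with h | heq
            · rw [hveq]; exact h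
            · exfalso
              rw [heq, hbδ] at hsbh
              exact absurd hsbh (ne_of_gt hvδ)
          · intro hv
            have hvδ : S.ht v < δ := hbδ ▸ LexOmega1Tree.ht_lt_of_lt hv
            obtain ⟨sa, hsa, hsah⟩ := LexOmega1Tree.exists_restrict a (α := S.ht v)
              (by rw [haδ]; exact hvδ.le)
            have hveq : sa = v := hno (S.ht v) hvδ sa v hsa (Or.inl hv) hsah rfl
            rcases hsa with h | heq
            · rw [← hveq]; exact h
            · exfalso
              rw [heq, haδ] at hsah
              exact absurd hsah (ne_of_gt hvδ)
      obtain ⟨α', hα'δ, u1, u2, hu1a, hu2b, hh1, hh2, hne12⟩ := hsplit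
      have htu1 : S.le t u1 := by
        rcases le_or_gt (S.ht t) α' with h | h
        · exact LexOmega1Tree.pred_le_pred hta hu1a (by rw [hh1]; exact h)
        · exfalso
          have e1 : S.le u1 t := LexOmega1Tree.pred_le_pred hu1a hta (by rw [hh1]; exact h.le)
          have e2 : S.le u2 t := LexOmega1Tree.pred_le_pred hu2b htb (by rw [hh2]; exact h.le)
          exact hne12 (LexOmega1Tree.pred_eq e1 e2 (hh1.trans hh2.symm))
      have hu1U : u1 ∈ U := by
        rcases hu1a with h | rfl
        · exact hdc _ _ haU h
        · exact haU
      have hlt1 : S.lt u1 a := by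
        rcases hu1a with h | rfl
        · exact h
        · exact absurd (haδ.symm.trans hh1) (ne_of_gt hα'δ)
      have hlt2 : S.lt u2 b := by
        rcases hu2b with h | rfl
        · exact h
        · exact absurd (hbδ.symm.trans hh2) (ne_of_gt hα'δ)
      have hlex12 : S.lexlt u1 u2 := by
        rcases S.lexlt_tricho u1 u2 (hh1.trans hh2.symm) hne12 with h | h
        · exact h
        · exact absurd (S.lexlt_coh u2 u1 b a h hlt2 hlt1 (hbδ.trans haδ.symm))
            (S.lexlt_asymm a b hab)
      have hlamle : lamR u1 ≤ S.ht a := by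
        rw [haδ]
        exact ((hδcl u1 hu1U (hh1 ▸ hα'δ)).1).le
      obtain ⟨c, hcU, hu1c, hch, hlac⟩ := hlamR3 u1 hu1U a haU hu1a hlamle
      have hltc : S.lt u1 c := by
        rcases hu1c with h | heq
        · exact h
        · exfalso
          rw [← heq] at hch
          rw [haδ] at hch
          exact absurd (hh1.symm.trans hch) (ne_of_lt hα'δ)
      have hlcb : S.lexlt c b :=
        S.lexlt_coh u1 u2 c b hlex12 hltc hlt2 (hch.trans (haδ.trans hbδ.symm))
      exact ⟨c, hmk hcU (hch.trans haδ) (LexOmega1Tree.le_trans' htu1 hu1c), hlac, hlcb⟩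
    · -- no right end point
      rintro a ha
      obtain ⟨haU, haδ, hta⟩ := hmemA ha
      obtain ⟨c, hcU, htc, hch, hlac⟩ := hlamR3 t htU a haU hta
        (by rw [haδ]; exact ((hδcl t htU htδ).1).le)
      exact ⟨c, hmk hcU (hch.trans haδ) htc, hlac⟩
    · -- no left end point
      rintro a ha
      obtain ⟨haU, haδ, hta⟩ := hmemA ha
      obtain ⟨c, hcU, htc, hch, hlca⟩ := hlamL3 t htU a haU hta
        (by rw [haδ]; exact ((hδcl t htU htδ).2).le)
      exact ⟨c, hmk hcU (hch.trans haδ) htc, hlca⟩
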